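/- Let H be a real Hilbert space, F : H → ℝ differentiable with β-Lipschitz gradient for some β > 0 and bounded below on a nonempty closed convex set K ⊆ H. Let (λ_k)_{k ≥ 1} be generated by inexact projected gradient descent: λ₁ ∈ K and λ_{k+1} = proj_K(λ_k − (1/β) g_k), where g_k ∈ H satisfies ‖∇F(λ_k) − g_k‖ ≤ B_k with Σ_{k=1}^∞ B_k² < ∞. Then Σ_{k=1}^∞ ‖λ_{k+1} − λ_k‖² < ∞; in particular ‖λ_{k+1} − λ_k‖ → 0 as k → ∞. -/

import Mathlib

/-- `q` is the metric projection of `p` onto the set `K`: `q ∈ K` and `q` is a closest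
point of `K` to `p`. -/
def IsProjOn {H : Type*} [NormedAddCommGroup H] (K : Set H) (p q : H) : Prop :=
  q ∈ K ∧ ∀ y ∈ K, ‖p - q‖ ≤ ‖p - y‖

open Real Set Filter
open scoped Topology RealInnerProductSpace

lemma descent_lemma {H : Type*} [NormedAddCommGroup H] [InnerProductSpace ℝ H] [CompleteSpace H]
    (F : H → ℝ) (F' : H → H) (hF : ∀ x, HasGradientAt F (F' x) x)
    (β : ℝ) (hβ : 0 < β) (hlip : LipschitzWith β.toNNReal F') (x y : H) :
    F y ≤ F x + ⟪F' x, y - x⟫ + β / 2 * ‖y - x‖ ^ 2 := by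
  set v := y - x with hv
  set ψ : ℝ → ℝ := fun t => F (x + t • v) - t * ⟪F' x, v⟫ - β / 2 * t ^ 2 * ‖v‖ ^ 2 with hψ
  have hline : ∀ t : ℝ, HasDerivAt (fun t : ℝ => x + t • v) v t := fun t => by
    simpa using ((hasDerivAt_id t).smul_const v).const_add x
  have hφ : ∀ t : ℝ, HasDerivAt (fun t => F (x + t • v)) ⟪F' (x + t • v), v⟫ t := fun t => by
    have := ((hF (x + t • v)).hasFDerivAt).comp_hasDerivAt t (hline t)
    simpa [Function.comp_def] using this
  have hψ' : ∀ t : ℝ, HasDerivAt ψ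
      (⟪F' (x + t • v), v⟫ - ⟪F' x, v⟫ - β * t * ‖v‖ ^ 2) t := by
    intro t
    have h1 : HasDerivAt (fun t : ℝ => t * ⟪F' x, v⟫) ⟪F' x, v⟫ t := by
      simpa using (hasDerivAt_id t).mul_const ⟪F' x, v⟫
    have h2 : HasDerivAt (fun t : ℝ => β / 2 * t ^ 2 * ‖v‖ ^ 2) (β * t * ‖v‖ ^ 2) t := by
      have : HasDerivAt (fun t : ℝ => t ^ 2) (2 * t) t := by
        simpa using hasDerivAt_pow 2 t
      have := (this.const_mul (β / 2)).mul_const (‖v‖ ^ 2)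
      exact this.congr_deriv (by ring)
    rw [hψ]
    exact ((hφ t).sub h1).sub h2
  have hanti : AntitoneOn ψ (Icc 0 1) := by
    apply antitoneOn_of_deriv_nonpos (convex_Icc 0 1)
    · exact (Differentiable.continuous fun t => (hψ' t).differentiableAt).continuousOn
    · intro t ht
      exact (hψ' t).differentiableAt.differentiableWithinAt
    · intro t ht
      rw [(hψ' t).deriv]
      rw [interior_Icc] at ht
      have ht0 : 0 ≤ t := le_of_lt ht.1
      have hCS : ⟪F' (x + t • v) - F' x, v⟫ ≤ β * t * ‖v‖ ^ 2 := by
        calc ⟪F' (x + t • v) - F' x, v⟫ ≤ ‖F' (x + t • v) - F' x‖ * ‖v‖ :=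
              real_inner_le_norm _ _
          _ ≤ β * (t * ‖v‖) * ‖v‖ := by
              apply mul_le_mul_of_nonneg_right _ (norm_nonneg v)
              have := hlip.dist_le_mul (x + t • v) x
              rw [dist_eq_norm] at this
              simpa [norm_smul, abs_of_nonneg ht0, Real.coe_toNNReal _ hβ.le,
                mul_assoc] using this
          _ = β * t * ‖v‖ ^ 2 := by ring
      have := inner_sub_left (𝕜 := ℝ) (F' (x + t • v)) (F' x) v
      linarith [hCS, this]
  have hmono : ψ 1 ≤ ψ 0 := hanti ⟨le_refl 0, zero_le_one⟩ ⟨zero_le_one, le_refl 1⟩ zero_le_one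
  have h0 : ψ 0 = F x := by simp [hψ]
  have h1 : ψ 1 = F y - ⟪F' x, v⟫ - β / 2 * ‖v‖ ^ 2 := by
    simp [hψ, hv]
  rw [h0, h1] at hmono
  linarith

/-- Summable squared steps of inexact projected gradient descent: if `∇F` is `β`-Lipschitz,
`F` is bounded below on `K`, and the gradient-estimate errors `B k` are square-summable,
then `Σ ‖λ_{k+1} - λ_k‖² < ∞` and in particular `‖λ_{k+1} - λ_k‖ → 0`. -/
theorem inexact_projected_gradient_summable_steps
    {H : Type*} [NormedAddCommGroup H] [InnerProductSpace ℝ H] [CompleteSpace H]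
    (F : H → ℝ) (F' : H → H) (hF : ∀ x, HasGradientAt F (F' x) x)
    (β : ℝ) (hβ : 0 < β) (hlip : LipschitzWith β.toNNReal F')
    (K : Set H) (hKne : K.Nonempty) (hKc : IsClosed K) (hKconv : Convex ℝ K)
    (c : ℝ) (hbelow : ∀ z ∈ K, c ≤ F z)
    (lam : ℕ → H) (g : ℕ → H) (B : ℕ → ℝ)
    (hlam0 : lam 0 ∈ K)
    (hstep : ∀ k, IsProjOn K (lam k - (1 / β) • g k) (lam (k + 1)))
    (hB : ∀ k, ‖F' (lam k) - g k‖ ≤ B k)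
    (hBsum : Summable fun k => B k ^ 2) :
    (Summable fun k => ‖lam (k + 1) - lam k‖ ^ 2) ∧
      Filter.Tendsto (fun k => ‖lam (k + 1) - lam k‖) Filter.atTop (nhds 0) := by
  have hmem : ∀ k, lam k ∈ K := by
    intro k
    induction k with
    | zero => exact hlam0
    | succ n _ => exact (hstep n).1
  -- projection variational inequality
  have hproj : ∀ k, ∀ w ∈ K, ⟪(lam k - (1 / β) • g k) - lam (k + 1), w - lam (k + 1)⟫ ≤ 0 := by
    intro k
    set p := lam k - (1 / β) • g k
    have hq : lam (k + 1) ∈ K := (hstep k).1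
    have : Nonempty K := ⟨⟨lam (k + 1), hq⟩⟩
    have heq : ‖p - lam (k + 1)‖ = ⨅ w : K, ‖p - w‖ := by
      apply le_antisymm
      · exact le_ciInf fun w => (hstep k).2 w w.2
      · have hbdd : BddBelow (Set.range fun w : K => ‖p - (w : H)‖) := by
          refine ⟨0, ?_⟩
          rintro _ ⟨w, rfl⟩
          exact norm_nonneg _
        exact ciInf_le hbdd ⟨lam (k + 1), hq⟩
    exact (norm_eq_iInf_iff_real_inner_le_zero hKconv hq).mp heq
  -- inner product bound from projection
  have hginner : ∀ k, ⟪g k, lam (k + 1) - lam k⟫ ≤ -β * ‖lam (k + 1) - lam k‖ ^ 2 := by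
    intro k
    have h := hproj k (lam k) (hmem k)
    set s := lam (k + 1) - lam k with hs
    have hexp : (lam k - (1 / β) • g k) - lam (k + 1) = -s - (1 / β) • g k := by
      rw [hs]; abel
    rw [hexp] at h
    have h2 : lam k - lam (k + 1) = -s := by rw [hs]; abel
    rw [h2] at h
    have := real_inner_self_eq_norm_sq s
    simp only [inner_sub_left, inner_neg_left, inner_neg_right, real_inner_smul_left, neg_neg] at h
    have h' : ‖s‖ ^ 2 + 1 / β * ⟪g k, s⟫ ≤ 0 := by rw [← this]; linarith
    have h'' := mul_le_mul_of_nonneg_left h' hβ.le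
    rw [mul_add, ← mul_assoc, mul_one_div_cancel hβ.ne', one_mul, mul_zero] at h''
    linarith
  -- key per-step inequality
  have key : ∀ k, β ^ 2 / 4 * ‖lam (k + 1) - lam k‖ ^ 2 ≤
      β * (F (lam k) - F (lam (k + 1))) + B k ^ 2 := by
    intro k
    set s := lam (k + 1) - lam k with hs
    have hdes := descent_lemma F F' hF β hβ hlip (lam k) (lam (k + 1))
    rw [← hs] at hdes
    have hsplit : ⟪F' (lam k), s⟫ = ⟪F' (lam k) - g k, s⟫ + ⟪g k, s⟫ := by
      rw [inner_sub_left]; ring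
    have hCS : ⟪F' (lam k) - g k, s⟫ ≤ B k * ‖s‖ :=
      le_trans (real_inner_le_norm _ _)
        (mul_le_mul_of_nonneg_right (hB k) (norm_nonneg s))
    have hg := hginner k
    rw [← hs] at hg
    nlinarith [sq_nonneg (B k - β / 2 * ‖s‖), sq_nonneg ‖s‖, hβ.le]
  -- bound partial sums
  have hBnn : ∀ k, (0:ℝ) ≤ B k ^ 2 := fun k => sq_nonneg _
  have hpartial : ∀ n, ∑ k ∈ Finset.range n, ‖lam (k + 1) - lam k‖ ^ 2 ≤
      4 / β ^ 2 * (β * (F (lam 0) - c) + ∑' k, B k ^ 2) := by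
    intro n
    have h1 : ∑ k ∈ Finset.range n, β ^ 2 / 4 * ‖lam (k + 1) - lam k‖ ^ 2 ≤
        β * (F (lam 0) - F (lam n)) + ∑ k ∈ Finset.range n, B k ^ 2 := by
      calc ∑ k ∈ Finset.range n, β ^ 2 / 4 * ‖lam (k + 1) - lam k‖ ^ 2
          ≤ ∑ k ∈ Finset.range n, (β * (F (lam k) - F (lam (k + 1))) + B k ^ 2) :=
            Finset.sum_le_sum fun k _ => key k
        _ = β * (F (lam 0) - F (lam n)) + ∑ k ∈ Finset.range n, B k ^ 2 := by
            rw [Finset.sum_add_distrib, ← Finset.mul_sum]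
            congr 1
            rw [Finset.sum_range_sub' (fun k => F (lam k)) n]
    have h2 : F (lam n) ≥ c := hbelow _ (hmem n)
    have h3 : ∑ k ∈ Finset.range n, B k ^ 2 ≤ ∑' k, B k ^ 2 :=
      Summable.sum_le_tsum (Finset.range n) (fun k _ => hBnn k) hBsum
    have h4 : ∑ k ∈ Finset.range n, β ^ 2 / 4 * ‖lam (k + 1) - lam k‖ ^ 2 =
        β ^ 2 / 4 * ∑ k ∈ Finset.range n, ‖lam (k + 1) - lam k‖ ^ 2 := by
      rw [Finset.mul_sum]
    have hβ2 : (0:ℝ) < β ^ 2 / 4 := by positivity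
    rw [h4] at h1
    have : β ^ 2 / 4 * ∑ k ∈ Finset.range n, ‖lam (k + 1) - lam k‖ ^ 2 ≤
        β * (F (lam 0) - c) + ∑' k, B k ^ 2 := by nlinarith
    calc ∑ k ∈ Finset.range n, ‖lam (k + 1) - lam k‖ ^ 2
        = 4 / β ^ 2 * (β ^ 2 / 4 * ∑ k ∈ Finset.range n, ‖lam (k + 1) - lam k‖ ^ 2) := by
          field_simp
      _ ≤ 4 / β ^ 2 * (β * (F (lam 0) - c) + ∑' k, B k ^ 2) := by
          apply mul_le_mul_of_nonneg_left this (by positivity)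
  have hsummable : Summable fun k => ‖lam (k + 1) - lam k‖ ^ 2 :=
    summable_of_sum_range_le (fun k => sq_nonneg _) hpartial
  refine ⟨hsummable, ?_⟩
  have hsq : Tendsto (fun k => ‖lam (k + 1) - lam k‖ ^ 2) atTop (𝓝 0) :=
    hsummable.tendsto_atTop_zero
  have := (Real.continuous_sqrt.tendsto 0).comp hsq
  simpa [Function.comp_def, Real.sqrt_sq (norm_nonneg _)] using this
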